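/- (Gradient constraint sign in the no-trade region) Let g(z) = λ p w(z) - (1+λz) w_z(z) on [ζ₁, ζ₂], where w(z) = a - (c/ν) h(z-θ) with a, c > 0, h(δ) = (3/2)δ²λ^{2/3} - δ⁴/ν² + (3/2)Bδ²λ^{4/3}, and the endpoints satisfy ζᵢ - θ = ±(ν/2)λ^{1/3}(1 - ξλ^{1/3}) + o(λ^{2/3}) with ξ ≥ 1, and g(ζ₁) = 0. Then g_z(z) = (c/ν)(1+λz)h''(z-θ) + λ²p(c/ν)h'(z-θ) is a concave-in-(z-θ)² expression whose values at both endpoints are (12c/ν)λ^{2/3}[½ξλ^{1/3} + o(λ^{1/3})] > 0 for λ small; hence g ≥ 0 on [ζ₁, ζ₂] for all sufficiently small λ > 0. -/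

import Mathlib

open Real Set

/-- `h(δ) = (3/2)δ²λ^{2/3} - δ⁴/ν² + (3/2)Bδ²λ^{4/3}`. -/
noncomputable def hFn (nu B lam δ : ℝ) : ℝ :=
  (3/2) * δ ^ 2 * lam ^ ((2:ℝ)/3) - δ ^ 4 / nu ^ 2 + (3/2) * B * δ ^ 2 * lam ^ ((4:ℝ)/3)

/-- `w(z) = a - (c/ν) h(z-θ)`. -/
noncomputable def wFn (nu B th a c lam z : ℝ) : ℝ := a - (c / nu) * hFn nu B lam (z - th)

/-- `g(z) = λ p w(z) - (1+λz) w_z(z)`. -/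
noncomputable def gFn (nu B th a c lam p z : ℝ) : ℝ :=
  lam * p * wFn nu B th a c lam z - (1 + lam * z) * deriv (wFn nu B th a c lam) z

noncomputable def hd (nu B lam δ : ℝ) : ℝ :=
  3 * δ * lam ^ ((2:ℝ)/3) - 4 * δ ^ 3 / nu ^ 2 + 3 * B * δ * lam ^ ((4:ℝ)/3)

noncomputable def hdd (nu B lam δ : ℝ) : ℝ :=
  3 * lam ^ ((2:ℝ)/3) - 12 * δ ^ 2 / nu ^ 2 + 3 * B * lam ^ ((4:ℝ)/3)

noncomputable def gd (nu B th c lam p z : ℝ) : ℝ :=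
  (c / nu) * (lam * (1 - p) * hd nu B lam (z - th) + (1 + lam * z) * hdd nu B lam (z - th))

lemma hFn_hasDerivAt (nu B lam δ : ℝ) :
    HasDerivAt (hFn nu B lam) (hd nu B lam δ) δ := by
  have h2 : HasDerivAt (fun x : ℝ => x ^ 2) (2 * δ) δ := by simpa using hasDerivAt_pow 2 δ
  have h4 : HasDerivAt (fun x : ℝ => x ^ 4) (4 * δ ^ 3) δ := by simpa using hasDerivAt_pow 4 δ
  have H := (((h2.const_mul ((3:ℝ)/2)).mul_const (lam ^ ((2:ℝ)/3))).sub
      (h4.div_const (nu ^ 2))).add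
      ((h2.const_mul ((3:ℝ)/2 * B)).mul_const (lam ^ ((4:ℝ)/3)))
  have hfun : hFn nu B lam = fun x : ℝ =>
      (3:ℝ)/2 * x ^ 2 * lam ^ ((2:ℝ)/3) - x ^ 4 / nu ^ 2 + (3:ℝ)/2 * B * x ^ 2 * lam ^ ((4:ℝ)/3) := by
    funext x; simp [hFn]
  rw [hfun]
  refine H.congr_deriv ?_
  unfold hd; ring

lemma hd_hasDerivAt (nu B lam δ : ℝ) :
    HasDerivAt (hd nu B lam) (hdd nu B lam δ) δ := by
  have h1 : HasDerivAt (fun x : ℝ => x) 1 δ := hasDerivAt_id δ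
  have h3 : HasDerivAt (fun x : ℝ => x ^ 3) (3 * δ ^ 2) δ := by simpa using hasDerivAt_pow 3 δ
  have H := (((h1.const_mul (3:ℝ)).mul_const (lam ^ ((2:ℝ)/3))).sub
      ((h3.const_mul (4:ℝ)).div_const (nu ^ 2))).add
      ((h1.const_mul ((3:ℝ) * B)).mul_const (lam ^ ((4:ℝ)/3)))
  have hfun : hd nu B lam = fun x : ℝ =>
      3 * x * lam ^ ((2:ℝ)/3) - 4 * x ^ 3 / nu ^ 2 + (3:ℝ) * B * x * lam ^ ((4:ℝ)/3) := by
    funext x; simp [hd]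
  rw [hfun]
  refine H.congr_deriv ?_
  unfold hdd; ring

lemma wFn_hasDerivAt (nu B th a c lam z : ℝ) :
    HasDerivAt (wFn nu B th a c lam) (-(c / nu * hd nu B lam (z - th))) z := by
  have hh : HasDerivAt (fun z : ℝ => hFn nu B lam (z - th)) (hd nu B lam (z - th)) z := by
    have := (hFn_hasDerivAt nu B lam (z - th)).comp z ((hasDerivAt_id z).sub_const th)
    rw [mul_one] at this; exact this
  have hfun : wFn nu B th a c lam = fun z : ℝ => a - c / nu * hFn nu B lam (z - th) := by
    funext x; simp [wFn]
  rw [hfun]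
  exact (hh.const_mul (c / nu)).const_sub a

lemma gFn_eq (nu B th a c lam p : ℝ) :
    gFn nu B th a c lam p = fun z =>
      lam * p * wFn nu B th a c lam z + (1 + lam * z) * (c / nu * hd nu B lam (z - th)) := by
  funext z
  rw [gFn, (wFn_hasDerivAt nu B th a c lam z).deriv]
  ring

lemma gFn_hasDerivAt (nu B th a c lam p z : ℝ) :
    HasDerivAt (gFn nu B th a c lam p) (gd nu B th c lam p z) z := by
  rw [gFn_eq]
  have hw := wFn_hasDerivAt nu B th a c lam z
  have hh' : HasDerivAt (fun z : ℝ => c / nu * hd nu B lam (z - th))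
      (c / nu * hdd nu B lam (z - th)) z := by
    have := (hd_hasDerivAt nu B lam (z - th)).comp z ((hasDerivAt_id z).sub_const th)
    simpa using this.const_mul (c / nu)
  have hlin : HasDerivAt (fun z : ℝ => 1 + lam * z) lam z := by
    simpa using ((hasDerivAt_id z).const_mul lam).const_add 1
  have H := (hw.const_mul (lam * p)).add (hlin.mul hh')
  refine H.congr_deriv ?_
  unfold gd; ring


lemma lemA (nu xi L z1 z2 th : ℝ) (hnu : 0 < nu) (hL0 : 0 < L) (hL1 : L ≤ 1)
    (hLxi : xi * L ≤ 1/4) (hxi0 : 0 < xi)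
    (hb1 : z1 - th + nu/2 * L * (1 - xi * L) ≤ nu/4 * L ^ 2)
    (hb2 : -(nu/4 * L ^ 2) ≤ z2 - th - nu/2 * L * (1 - xi * L)) : z1 ≤ z2 := by
  nlinarith [mul_nonneg (mul_pos hnu hL0).le (by linarith : (0:ℝ) ≤ 1 - L),
    mul_le_mul_of_nonneg_left hLxi (mul_pos hnu hL0).le]

lemma lemF (nu xi L z th : ℝ) (hnu : 0 < nu) (hL0 : 0 < L) (hL1 : L ≤ 1)
    (hLxi : xi * L ≤ 1/4) (hxi0 : 0 < xi) (hth : nu * L ≤ th)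
    (hlb : -(nu/2 * L * (1 - xi * L) + nu/4 * L ^ 2) ≤ z - th) : 0 ≤ z := by
  nlinarith [mul_nonneg (mul_pos hnu hL0).le (le_of_lt (mul_pos hxi0 hL0)),
    mul_nonneg (mul_pos hnu hL0).le (by linarith : (0:ℝ) ≤ 1 - L)]

lemma lemB (nu B xi L δ : ℝ) (hnu : 0 < nu) (hB : 1 ≤ B) (hxi : 1 ≤ xi)
    (hL0 : 0 < L) (hL1 : L ≤ 1) (hLxi : xi * L ≤ 1/4)
    (hδu : δ ≤ nu/2 * L * (1 - xi * L) + nu/4 * L ^ 2)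
    (hδl : -(nu/2 * L * (1 - xi * L) + nu/4 * L ^ 2) ≤ δ) :
    2 * L ^ 3 ≤ 3 * L ^ 2 - 12 * δ ^ 2 / nu ^ 2 + 3 * B * L ^ 4 := by
  have hnu2 : (0:ℝ) < nu ^ 2 := by positivity
  have hδsq : δ ^ 2 ≤ (nu/2 * L * (1 - xi * L) + nu/4 * L ^ 2) ^ 2 := sq_le_sq' hδl hδu
  have hdiv : 12 * δ ^ 2 / nu ^ 2 ≤ 12 * ((L/2 * (1 - xi * L) + L ^ 2/4) ^ 2) := by
    rw [div_le_iff₀ hnu2]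
    nlinarith [hδsq]
  have hxiL4 : xi ^ 2 * L ^ 4 ≤ 1/4 * (xi * L ^ 3) := by
    nlinarith [mul_nonneg (mul_nonneg (by linarith : (0:ℝ) ≤ xi) (pow_nonneg hL0.le 3))
      (by linarith : (0:ℝ) ≤ 1/4 - xi * L)]
  nlinarith [hdiv, hxiL4, pow_pos hL0 3, pow_pos hL0 4,
    mul_nonneg (by linarith : (0:ℝ) ≤ xi - 1) (pow_nonneg hL0.le 4),
    mul_nonneg (by linarith : (0:ℝ) ≤ B - 1) (pow_nonneg hL0.le 4),
    mul_nonneg (by linarith : (0:ℝ) ≤ xi - 1) (pow_nonneg hL0.le 3)]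

lemma lemC (nu B L δ : ℝ) (hnu : 0 < nu) (hB : 1 ≤ B)
    (hL0 : 0 < L) (hL1 : L ≤ 1)
    (hδu : δ ≤ nu * L) (hδl : -(nu * L) ≤ δ) :
    -((7 + 3 * B) * nu * L ^ 3) ≤ 3 * δ * L ^ 2 - 4 * δ ^ 3 / nu ^ 2 + 3 * B * δ * L ^ 4 := by
  have hnu2 : (0:ℝ) < nu ^ 2 := by positivity
  have hcub : δ ^ 3 ≤ (nu * L) ^ 3 := by
    nlinarith [mul_nonneg (sub_nonneg.2 hδu)
      (by nlinarith [sq_nonneg (nu * L + δ/2), sq_nonneg δ] : (0:ℝ) ≤ (nu*L)^2 + nu*L*δ + δ^2)]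
  have h1 : -(3 * nu * L ^ 3) ≤ 3 * δ * L ^ 2 := by nlinarith [sq_nonneg L]
  have h2 : -(4 * nu * L ^ 3) ≤ -(4 * δ ^ 3 / nu ^ 2) := by
    rw [neg_le_neg_iff, div_le_iff₀ hnu2]
    nlinarith [hcub]
  have h3 : -(3 * B * nu * L ^ 3) ≤ 3 * B * δ * L ^ 4 := by
    have hA : (0:ℝ) ≤ 3 * B * (nu * L + δ) * L ^ 4 :=
      mul_nonneg (mul_nonneg (by linarith) (by linarith)) (pow_nonneg hL0.le 4)
    have hBB : (0:ℝ) ≤ 3 * B * nu * (L ^ 3 - L ^ 5) := by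
      apply mul_nonneg (by nlinarith)
      nlinarith [mul_nonneg (pow_nonneg hL0.le 3)
        (mul_nonneg (by linarith : (0:ℝ) ≤ 1 - L) (by linarith : (0:ℝ) ≤ 1 + L))]
    nlinarith [hA, hBB]
  linarith

lemma lemE (B nu lam p z L hdV hddV : ℝ) (hnu : 0 < nu) (hB : 1 ≤ B) (hp1 : p < 1)
    (hL0 : 0 < L) (hcube : L ^ 3 = lam) (hznn : 0 ≤ z)
    (hC : (1 - p) * (7 + 3 * B) * nu * L ^ 3 ≤ 1)
    (hlow : -((7 + 3 * B) * nu * L ^ 3) ≤ hdV) (hddlb : 2 * L ^ 3 ≤ hddV) :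
    0 < lam * (1 - p) * hdV + (1 + lam * z) * hddV := by
  have hlam : 0 < lam := by rw [← hcube]; positivity
  have hnn : (0:ℝ) ≤ lam * (1 - p) := by nlinarith
  have ht1 : -(L ^ 3) ≤ lam * (1 - p) * hdV := by
    have h := mul_le_mul_of_nonneg_left hlow hnn
    have h2 : lam * (1 - p) * ((7 + 3 * B) * nu * L ^ 3) ≤ L ^ 3 := by
      have he : lam * (1 - p) * ((7 + 3 * B) * nu * L ^ 3)
          = ((1 - p) * (7 + 3 * B) * nu * L ^ 3) * L ^ 3 := by rw [← hcube]; ring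
      rw [he]
      nlinarith [pow_pos hL0 3]
    linarith [neg_le_neg h2]
  have ht2 : 2 * L ^ 3 ≤ (1 + lam * z) * hddV := by
    have h0 : (0:ℝ) ≤ lam * z := mul_nonneg hlam.le hznn
    nlinarith [mul_nonneg h0 (by nlinarith [pow_pos hL0 3] : (0:ℝ) ≤ hddV)]
  nlinarith [pow_pos hL0 3]


/-- Gradient-constraint sign in the no-trade region: with endpoints
`ζᵢ - θ = ±(ν/2)λ^{1/3}(1-ξλ^{1/3}) + o(λ^{2/3})` and `g(ζ₁) = 0`, the derivative of `g`
is positive at both endpoints and `g ≥ 0` on `[ζ₁, ζ₂]` for all small `λ > 0`. -/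
theorem stmt10 (nu B th p xi K : ℝ) (hnu : 0 < nu) (hB : 1 ≤ B) (hth : 0 < th)
    (hp1 : p < 1) (hp0 : p ≠ 0) (hxi : 1 ≤ xi) (hK : 1 ≤ K)
    (a c zeta1 zeta2 : ℝ → ℝ)
    (hac : ∀ lam ∈ Ioo (0:ℝ) 1, 0 < a lam ∧ a lam ≤ K ∧ 1/K ≤ c lam ∧ c lam ≤ K)
    (hz1 : ∀ ε > 0, ∃ lam0 > 0, ∀ lam ∈ Ioo (0:ℝ) lam0,
      |zeta1 lam - th + (nu/2) * lam ^ ((1:ℝ)/3) * (1 - xi * lam ^ ((1:ℝ)/3))|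
        ≤ ε * lam ^ ((2:ℝ)/3))
    (hz2 : ∀ ε > 0, ∃ lam0 > 0, ∀ lam ∈ Ioo (0:ℝ) lam0,
      |zeta2 lam - th - (nu/2) * lam ^ ((1:ℝ)/3) * (1 - xi * lam ^ ((1:ℝ)/3))|
        ≤ ε * lam ^ ((2:ℝ)/3))
    (hg1 : ∀ lam ∈ Ioo (0:ℝ) 1, gFn nu B th (a lam) (c lam) lam p (zeta1 lam) = 0) :
    ∃ lam0 > 0, ∀ lam ∈ Ioo (0:ℝ) lam0,
      0 < deriv (gFn nu B th (a lam) (c lam) lam p) (zeta1 lam) ∧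
      0 < deriv (gFn nu B th (a lam) (c lam) lam p) (zeta2 lam) ∧
      ∀ z ∈ Icc (zeta1 lam) (zeta2 lam), 0 ≤ gFn nu B th (a lam) (c lam) lam p z := by
  obtain ⟨lam1, hlam1pos, H1⟩ := hz1 (nu/4) (by positivity)
  obtain ⟨lam2, hlam2pos, H2⟩ := hz2 (nu/4) (by positivity)
  obtain ⟨C, hCdef⟩ : ∃ C : ℝ, C = (1 - p) * (7 + 3 * B) * nu := ⟨_, rfl⟩
  have hCpos : 0 < C := by
    rw [hCdef]
    have h1 : 0 < 1 - p := by linarith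
    have h2 : 0 < (7:ℝ) + 3 * B := by linarith
    positivity
  obtain ⟨Lmax, hLmaxdef⟩ :
      ∃ Lm : ℝ, Lm = min (min (1/(4*xi)) (th/nu)) (min (1/(C+1)) 1) := ⟨_, rfl⟩
  have hxi0 : 0 < xi := by linarith
  have hLmaxpos : 0 < Lmax := by
    rw [hLmaxdef]
    exact lt_min (lt_min (by positivity) (by positivity)) (lt_min (by positivity) one_pos)
  refine ⟨min (min lam1 lam2) (min (Lmax^3) 1), by positivity, ?_⟩
  intro lam hlam
  obtain ⟨hlam0, hlamlt⟩ := hlam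
  rw [lt_min_iff, lt_min_iff, lt_min_iff] at hlamlt
  obtain ⟨⟨hl1, hl2⟩, hl3, hl4⟩ := hlamlt
  have hIoo : lam ∈ Ioo (0:ℝ) 1 := ⟨hlam0, hl4⟩
  obtain ⟨ha, haK, hcK1, hcK2⟩ := hac lam hIoo
  have hc0 : 0 < c lam := lt_of_lt_of_le (by positivity) hcK1
  obtain ⟨L, hLdef⟩ : ∃ L : ℝ, L = lam ^ ((1:ℝ)/3) := ⟨_, rfl⟩
  have hL0 : 0 < L := hLdef ▸ Real.rpow_pos_of_pos hlam0 _
  have hcube : L ^ 3 = lam := by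
    rw [hLdef, ← Real.rpow_natCast (lam ^ ((1:ℝ)/3)) 3, ← Real.rpow_mul hlam0.le]
    norm_num
  have hLlt : L < Lmax := by
    have h3 : L ^ 3 < Lmax ^ 3 := by rw [hcube]; exact hl3
    exact lt_of_pow_lt_pow_left₀ 3 hLmaxpos.le h3
  have hLm := hLlt.le.trans_eq hLmaxdef
  have hL1 : L ≤ 1 := le_trans hLm (le_trans (min_le_right _ _) (min_le_right _ _))
  have hL3L : L ^ 3 ≤ L := pow_le_of_le_one hL0.le hL1 (by norm_num)
  have hLxi : xi * L ≤ 1/4 := by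
    have h := le_trans hLm (le_trans (min_le_left _ _) (min_le_left _ _))
    rw [le_div_iff₀ (by positivity)] at h
    linarith only [h]
  have hLth : nu * L ≤ th := by
    have h := le_trans hLm (le_trans (min_le_left _ _) (min_le_right _ _))
    rw [le_div_iff₀ hnu] at h
    linarith only [h]
  have hLC : C * L ^ 3 ≤ 1 := by
    have h := le_trans hLm (le_trans (min_le_right _ _) (min_le_left _ _))
    rw [le_div_iff₀ (by positivity)] at h
    have h2 := mul_le_mul_of_nonneg_left hL3L hCpos.le
    linarith only [h, h2, hL0]
  have hrw2 : lam ^ ((2:ℝ)/3) = L ^ 2 := by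
    rw [hLdef, ← Real.rpow_natCast (lam ^ ((1:ℝ)/3)) 2, ← Real.rpow_mul hlam0.le]
    norm_num
  have hrw4 : lam ^ ((4:ℝ)/3) = L ^ 4 := by
    rw [hLdef, ← Real.rpow_natCast (lam ^ ((1:ℝ)/3)) 4, ← Real.rpow_mul hlam0.le]
    norm_num
  have b1 := H1 lam ⟨hlam0, hl1⟩
  have b2 := H2 lam ⟨hlam0, hl2⟩
  rw [← hLdef, hrw2, abs_le] at b1 b2
  obtain ⟨b1l, b1u⟩ := b1
  obtain ⟨b2l, b2u⟩ := b2
  have hzz : zeta1 lam ≤ zeta2 lam :=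
    lemA nu xi L (zeta1 lam) (zeta2 lam) th hnu hL0 hL1 hLxi hxi0
      (by linarith only [b1u]) (by linarith only [b2l])
  have hgd : ∀ z ∈ Icc (zeta1 lam) (zeta2 lam), 0 < gd nu B th (c lam) lam p z := by
    intro z hz
    have hδu : z - th ≤ nu/2 * L * (1 - xi * L) + nu/4 * L ^ 2 := by
      linarith only [hz.2, b2u]
    have hδl : -(nu/2 * L * (1 - xi * L) + nu/4 * L ^ 2) ≤ z - th := by
      linarith only [hz.1, b1l]
    have hznn : 0 ≤ z := lemF nu xi L z th hnu hL0 hL1 hLxi hxi0 hLth hδl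
    have hp1' : (0:ℝ) ≤ nu * L * (xi * L) :=
      mul_nonneg (mul_pos hnu hL0).le (mul_pos hxi0 hL0).le
    have hp2' : (0:ℝ) ≤ nu * L * (1 - L) := mul_nonneg (mul_pos hnu hL0).le (by linarith)
    have hp3' : (0:ℝ) < nu * L := mul_pos hnu hL0
    have hδu' : z - th ≤ nu * L := by nlinarith only [hδu, hp1', hp2', hp3']
    have hδl' : -(nu * L) ≤ z - th := by nlinarith only [hδl, hp1', hp2', hp3']
    have hddlb : 2 * L ^ 3 ≤ hdd nu B lam (z - th) := by
      unfold hdd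
      rw [hrw2, hrw4]
      exact lemB nu B xi L (z - th) hnu hB hxi hL0 hL1 hLxi hδu hδl
    have hlow : -((7 + 3 * B) * nu * L ^ 3) ≤ hd nu B lam (z - th) := by
      unfold hd
      rw [hrw2, hrw4]
      exact lemC nu B L (z - th) hnu hB hL0 hL1 hδu' hδl'
    have hinner := lemE B nu lam p z L (hd nu B lam (z - th)) (hdd nu B lam (z - th))
      hnu hB hp1 hL0 hcube hznn (hCdef ▸ hLC) hlow hddlb
    exact mul_pos (by positivity) hinner
  have hderiv : ∀ z, deriv (gFn nu B th (a lam) (c lam) lam p) z = gd nu B th (c lam) lam p z :=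
    fun z => (gFn_hasDerivAt nu B th (a lam) (c lam) lam p z).deriv
  refine ⟨?_, ?_, ?_⟩
  · rw [hderiv]; exact hgd _ ⟨le_refl _, hzz⟩
  · rw [hderiv]; exact hgd _ ⟨hzz, le_refl _⟩
  · intro z hz
    have hmono : StrictMonoOn (gFn nu B th (a lam) (c lam) lam p)
        (Icc (zeta1 lam) (zeta2 lam)) := by
      apply strictMonoOn_of_deriv_pos (convex_Icc _ _)
      · exact fun x _ =>
          ((gFn_hasDerivAt nu B th (a lam) (c lam) lam p x).differentiableAt.continuousAt).continuousWithinAt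
      · intro x hx
        rw [hderiv]
        exact hgd x (interior_subset hx)
    rcases eq_or_lt_of_le hz.1 with h | h
    · rw [← h, hg1 lam hIoo]
    · have hlt := hmono ⟨le_refl _, hzz⟩ hz h
      rw [hg1 lam hIoo] at hlt
      exact hlt.le
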